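/- In characteristic 2, the degree-3 homogeneous polynomials in k[x,y,z] whose xyz-coefficient vanishes are exactly the elements of the image of the multiplication map F*H⁰(O_{ℙ²}(1)) ⊗ H⁰(O_{ℙ²}(1)) → H⁰(O_{ℙ²}(3)), i.e., the span of products ℓ² · m of a square of a linear form with a linear form. -/

import Mathlib

open MvPolynomial

private lemma fin3_ext (d e : Fin 3 →₀ ℕ) (h0 : d 0 = e 0) (h1 : d 1 = e 1)
    (h2 : d 2 = e 2) : d = e := by
  ext x
  fin_cases x
  · exact h0
  · exact h1
  · exact h2

private lemma deg_fin3 (d : Fin 3 →₀ ℕ) : d.degree = d 0 + d 1 + d 2 := by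
  rw [Finsupp.degree_apply]
  rw [Finset.sum_subset (Finset.subset_univ _)
    (fun i _ hi => Finsupp.notMem_support_iff.mp hi)]
  simp [Fin.sum_univ_three]

private lemma deg1_single (d : Fin 3 →₀ ℕ) (h : d 0 + d 1 + d 2 = 1) :
    ∃ i, d = Finsupp.single i 1 := by
  have h' : d 0 = 1 ∨ d 1 = 1 ∨ d 2 = 1 := by omega
  rcases h' with h0 | h1 | h2
  · exact ⟨0, fin3_ext _ _ (by simp [Finsupp.single_apply]; omega)
      (by simp [Finsupp.single_apply]; omega) (by simp [Finsupp.single_apply]; omega)⟩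
  · exact ⟨1, fin3_ext _ _ (by simp [Finsupp.single_apply]; omega)
      (by simp [Finsupp.single_apply]; omega) (by simp [Finsupp.single_apply]; omega)⟩
  · exact ⟨2, fin3_ext _ _ (by simp [Finsupp.single_apply]; omega)
      (by simp [Finsupp.single_apply]; omega) (by simp [Finsupp.single_apply]; omega)⟩

private lemma deg3_split (d : Fin 3 →₀ ℕ) (h : d 0 + d 1 + d 2 = 3)
    (hne : ¬(d 0 = 1 ∧ d 1 = 1 ∧ d 2 = 1)) :
    ∃ i j : Fin 3, d = Finsupp.single i 2 + Finsupp.single j 1 := by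
  have hi : ∃ i : Fin 3, 2 ≤ d i := by
    by_contra hcon
    push_neg at hcon
    have := hcon 0; have := hcon 1; have := hcon 2
    omega
  obtain ⟨i, hi⟩ := hi
  refine ⟨i, ?_⟩
  set e : Fin 3 →₀ ℕ := d - Finsupp.single i 2 with he
  have hei : ∀ x, e x = d x - Finsupp.single i 2 x := fun x => by
    simp [he, Finsupp.tsub_apply]
  have hsum : e 0 + e 1 + e 2 = 1 := by
    have h0 := hei 0; have h1 := hei 1; have h2 := hei 2
    fin_cases i <;> simp_all [Finsupp.single_apply] <;> omega
  obtain ⟨j, hj⟩ := deg1_single e hsum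
  refine ⟨j, ?_⟩
  have key : ∀ x, d x = Finsupp.single i 2 x + Finsupp.single j 1 x := by
    intro x
    have hx := hei x
    rw [hj] at hx
    have hix : Finsupp.single i 2 x ≤ d x := by
      rcases eq_or_ne i x with rfl | hne'
      · simpa using hi
      · simp [Finsupp.single_apply, hne']
    omega
  exact fin3_ext _ _ (by rw [key 0]; simp) (by rw [key 1]; simp) (by rw [key 2]; simp)

/-- In characteristic 2, the degree-3 homogeneous polynomials in `k[x,y,z]`
whose `xyz`-coefficient vanishes are exactly the elements of the span of the products
`ℓ² · m` of a square of a linear form `ℓ` with a linear form `m` (the image of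
`F*H⁰(O(1)) ⊗ H⁰(O(1)) → H⁰(O(3))`). -/
theorem stmt6 (k : Type*) [Field k] [CharP k 2]
    (f : MvPolynomial (Fin 3) k) (hf : f.IsHomogeneous 3) :
    f ∈ Submodule.span k
        {g : MvPolynomial (Fin 3) k |
          ∃ ℓ m : MvPolynomial (Fin 3) k,
            ℓ.IsHomogeneous 1 ∧ m.IsHomogeneous 1 ∧ g = ℓ ^ 2 * m} ↔
      MvPolynomial.coeff
        (Finsupp.single (0 : Fin 3) 1 + Finsupp.single 1 1 + Finsupp.single 2 1) f = 0 := by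
  set t : Fin 3 →₀ ℕ := Finsupp.single (0 : Fin 3) 1 + Finsupp.single 1 1 + Finsupp.single 2 1
    with ht
  have htx : ∀ x : Fin 3, t x = 1 := by
    intro x
    rw [ht]
    fin_cases x <;> simp [Finsupp.single_apply]
  constructor
  · -- forward: every element of span has zero xyz coefficient
    intro hmem
    have hle : Submodule.span k
        {g : MvPolynomial (Fin 3) k |
          ∃ ℓ m : MvPolynomial (Fin 3) k,
            ℓ.IsHomogeneous 1 ∧ m.IsHomogeneous 1 ∧ g = ℓ ^ 2 * m} ≤
        LinearMap.ker (lcoeff k t) := by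
      rw [Submodule.span_le]
      rintro g ⟨ℓ, m, hℓ, hm, rfl⟩
      simp only [SetLike.mem_coe, LinearMap.mem_ker, lcoeff_apply]
      -- write ℓ as a combination of variables
      have hsingle : ∀ d ∈ ℓ.support, ∃ i : Fin 3, d = Finsupp.single i 1 := by
        intro d hd
        have hc : coeff d ℓ ≠ 0 := mem_support_iff.mp hd
        have hdeg : d.degree = 1 := by
          by_contra hne
          exact hc (hℓ.coeff_eq_zero hne)
        rw [deg_fin3] at hdeg
        exact deg1_single d hdeg
      have hsub : ℓ.support ⊆
          Finset.image (fun i : Fin 3 => Finsupp.single i 1) Finset.univ := by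
        intro d hd
        obtain ⟨i, rfl⟩ := hsingle d hd
        simp
      have hℓeq : ℓ = ∑ i : Fin 3, C (coeff (Finsupp.single i 1) ℓ) * X i := by
        conv_lhs => rw [ℓ.as_sum]
        rw [Finset.sum_subset hsub (fun d _ hd => by
          rw [monomial_eq_zero]
          exact notMem_support_iff.mp hd)]
        rw [Finset.sum_image (fun a _ b _ hab => by
          simpa using Finsupp.single_left_injective (by norm_num) hab)]
        exact Finset.sum_congr rfl fun i _ => (C_mul_X_eq_monomial).symm
      rw [hℓeq, sum_pow_char, Finset.sum_mul, coeff_sum]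
      refine Finset.sum_eq_zero fun i _ => ?_
      rw [mul_pow, ← C_pow, X_pow_eq_monomial, C_mul_monomial, coeff_monomial_mul']
      rw [if_neg]
      intro hle2
      have h2 := Finsupp.le_def.mp hle2 i
      rw [htx i] at h2
      simp [Finsupp.single_apply] at h2
    simpa using hle hmem
  · -- backward
    intro hcoeff
    have hfs : f = ∑ d ∈ f.support, monomial d (coeff d f) := f.as_sum
    rw [hfs]
    refine Submodule.sum_mem _ fun d hd => ?_
    have hc : coeff d f ≠ 0 := mem_support_iff.mp hd
    have hdeg : d.degree = 3 := by
      by_contra hne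
      exact hc (hf.coeff_eq_zero hne)
    rw [deg_fin3] at hdeg
    have hne : ¬(d 0 = 1 ∧ d 1 = 1 ∧ d 2 = 1) := by
      rintro ⟨h0, h1, h2⟩
      apply hc
      have hdt : d = t :=
        fin3_ext _ _ (by rw [h0, htx 0]) (by rw [h1, htx 1]) (by rw [h2, htx 2])
      rw [hdt]
      exact hcoeff
    obtain ⟨i, j, rfl⟩ := deg3_split d hdeg hne
    have hgen : (X i : MvPolynomial (Fin 3) k) ^ 2 * X j ∈
        {g : MvPolynomial (Fin 3) k |
          ∃ ℓ m : MvPolynomial (Fin 3) k,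
            ℓ.IsHomogeneous 1 ∧ m.IsHomogeneous 1 ∧ g = ℓ ^ 2 * m} :=
      ⟨X i, X j, isHomogeneous_X _ _, isHomogeneous_X _ _, rfl⟩
    have hmon : monomial (Finsupp.single i 2 + Finsupp.single j 1)
        (coeff (Finsupp.single i 2 + Finsupp.single j 1) f) =
        coeff (Finsupp.single i 2 + Finsupp.single j 1) f •
          ((X i : MvPolynomial (Fin 3) k) ^ 2 * X j) := by
      rw [X_pow_eq_monomial, X, monomial_mul, smul_monomial]
      simp
    rw [hmon]
    exact Submodule.smul_mem _ _ (Submodule.subset_span hgen)
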